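/- Let a > 0, b ≥ 0, d > 0 and κ > 1 be real numbers such that a > (2b/d)^{1/κ}. Then there exists no continuous nonnegative function y : [0,∞) → ℝ satisfying y(t) ≥ a − b·t + d·∫₀ᵗ y(s)^κ ds for all t > 0. -/

import Mathlib

open Set intervalIntegral

theorem stmt_1 (a b d κ : ℝ) (ha : 0 < a) (hb : 0 ≤ b) (hd : 0 < d) (hκ : 1 < κ)
    (hcond : a > (2 * b / d) ^ (1 / κ)) :
    ¬ ∃ y : ℝ → ℝ, ContinuousOn y (Set.Ici 0) ∧ (∀ t ∈ Set.Ici (0 : ℝ), 0 ≤ y t) ∧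
      (∀ t > (0 : ℝ), y t ≥ a - b * t + d * ∫ s in (0 : ℝ)..t, y s ^ κ) := by
  rintro ⟨y, hy_cont, hy_nonneg, hy⟩
  have hκ0 : (0:ℝ) < κ := by linarith
  set r := (2 * b / d) ^ (1 / κ) with hr
  have hr0 : 0 ≤ r := Real.rpow_nonneg (by positivity) _
  set a' := (a + r) / 2 with ha'
  have ha'pos : 0 < a' := by rw [ha']; linarith
  have hra' : r < a' := by rw [ha']; linarith
  have ha'a : a' < a := by rw [ha']; linarith
  have hkey : 2 * b < d * a' ^ κ := by
    have h1 : r ^ κ < a' ^ κ := Real.rpow_lt_rpow hr0 hra' hκ0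
    have h2 : r ^ κ = 2 * b / d := by
      rw [hr, ← Real.rpow_mul (by positivity), one_div,
        inv_mul_cancel₀ (ne_of_gt hκ0), Real.rpow_one]
    rw [h2] at h1
    calc 2 * b = d * (2 * b / d) := by field_simp
    _ < d * a' ^ κ := by exact (mul_lt_mul_iff_right₀ hd).2 h1
  -- the continuous extension of the integrand
  set f : ℝ → ℝ := fun t => y (max t 0) ^ κ with hf
  have hf_cont : Continuous f := by
    have hy' : Continuous fun t : ℝ => y (max t 0) :=
      hy_cont.comp_continuous (continuous_id.max continuous_const)
        (fun x => le_max_right x 0)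
    exact hy'.rpow_const (fun x => Or.inr hκ0.le)
  have hf_eq : ∀ s : ℝ, 0 ≤ s → f s = y s ^ κ := by
    intro s hs; simp [hf, max_eq_left hs]
  have hIeq : ∀ t : ℝ, 0 ≤ t →
      (∫ s in (0:ℝ)..t, y s ^ κ) = ∫ s in (0:ℝ)..t, f s := by
    intro t ht
    refine intervalIntegral.integral_congr ?_
    intro s hs
    rw [uIcc_of_le ht] at hs
    exact (hf_eq s hs.1).symm
  set F : ℝ → ℝ := fun t => ∫ s in (0:ℝ)..t, f s with hF
  have hF_deriv : ∀ t : ℝ, HasDerivAt F (f t) t := by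
    intro t
    exact intervalIntegral.integral_hasDerivAt_right
      (hf_cont.intervalIntegrable 0 t)
      hf_cont.stronglyMeasurable.stronglyMeasurableAtFilter
      hf_cont.continuousAt
  have hF_cont : Continuous F :=
    continuous_iff_continuousAt.2 fun t => (hF_deriv t).continuousAt
  have hF0 : F 0 = 0 := intervalIntegral.integral_same
  -- y 0 ≥ a
  have hy0 : a ≤ y 0 := by
    have h1 : Filter.Tendsto y (nhdsWithin 0 (Ioi 0)) (nhds (y 0)) :=
      (hy_cont 0 Set.self_mem_Ici).mono_left (nhdsWithin_mono _ Ioi_subset_Ici_self)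
    have h2 : Filter.Tendsto (fun t => a - b * t + d * F t)
        (nhdsWithin 0 (Ioi 0)) (nhds a) := by
      have hc : Continuous fun t => a - b * t + d * F t :=
        (continuous_const.sub (continuous_const.mul continuous_id)).add
          (continuous_const.mul hF_cont)
      have h2' : Filter.Tendsto (fun t => a - b * t + d * F t)
          (nhdsWithin 0 (Ioi 0)) (nhds (a - b * 0 + d * F 0)) :=
        (hc.tendsto 0).mono_left nhdsWithin_le_nhds
      simpa [hF0] using h2'
    refine le_of_tendsto_of_tendsto h2 h1 (eventually_mem_nhdsWithin.mono ?_)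
    intro t ht
    have := hy t ht
    rwa [hIeq t ht.le] at this
  -- Step 1: y ≥ a' on [0, ∞)
  have hA : ∀ t : ℝ, 0 ≤ t → a' ≤ y t := by
    by_contra hcon
    push_neg at hcon
    obtain ⟨t1, ht1, hyt1⟩ := hcon
    set U := {t : ℝ | 0 < t ∧ y t < a'} with hU
    have ht1pos : 0 < t1 := by
      rcases ht1.eq_or_lt with h | h
      · exfalso; rw [← h] at hyt1; linarith
      · exact h
    have hU_ne : U.Nonempty := ⟨t1, ht1pos, hyt1⟩
    have hUbdd : BddBelow U := ⟨0, fun t ht => ht.1.le⟩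
    set t₀ := sInf U with ht₀def
    have ht₀0 : 0 ≤ t₀ := le_csInf hU_ne fun t ht => ht.1.le
    have ht₀le : y t₀ ≤ a' := by
      have hcl : t₀ ∈ closure U := csInf_mem_closure hU_ne hUbdd
      have hne : (nhdsWithin t₀ U).NeBot := mem_closure_iff_nhdsWithin_neBot.1 hcl
      have htd : Filter.Tendsto y (nhdsWithin t₀ U) (nhds (y t₀)) :=
        (hy_cont t₀ ht₀0).mono_left (nhdsWithin_mono _ fun s hs => hs.1.le)
      exact le_of_tendsto htd (eventually_mem_nhdsWithin.mono fun s hs => hs.2.le)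
    have hbelow : ∀ s : ℝ, 0 ≤ s → s < t₀ → a' ≤ y s := by
      intro s hs hst
      rcases hs.eq_or_lt with h | h
      · rw [← h]; linarith
      · by_contra hcontra
        push_neg at hcontra
        exact absurd (csInf_le hUbdd ⟨h, hcontra⟩) (not_le.2 hst)
    have ht₀pos : 0 < t₀ := by
      rcases ht₀0.eq_or_lt with h | h
      · exfalso; rw [← h] at ht₀le; linarith
      · exact h
    have ht₀ge : a' ≤ y t₀ := by
      have hmem : t₀ ∈ closure (Ioo 0 t₀) := by
        rw [closure_Ioo (ne_of_lt ht₀pos)]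
        exact ⟨ht₀0, le_refl _⟩
      have hne : (nhdsWithin t₀ (Ioo 0 t₀)).NeBot :=
        mem_closure_iff_nhdsWithin_neBot.1 hmem
      have htd : Filter.Tendsto y (nhdsWithin t₀ (Ioo 0 t₀)) (nhds (y t₀)) :=
        (hy_cont t₀ ht₀0).mono_left (nhdsWithin_mono _ fun s hs => hs.1.le)
      exact ge_of_tendsto htd
        (eventually_mem_nhdsWithin.mono fun s hs => hbelow s hs.1.le hs.2)
    have hIbd : a' ^ κ * t₀ ≤ ∫ s in (0:ℝ)..t₀, y s ^ κ := by
      have hInt : IntervalIntegrable (fun s => y s ^ κ) MeasureTheory.volume 0 t₀ := by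
        apply ContinuousOn.intervalIntegrable
        rw [uIcc_of_le ht₀0]
        exact (hy_cont.mono (Icc_subset_Ici_self)).rpow_const
          (fun x _ => Or.inr hκ0.le)
      have hmono : ∀ s ∈ Icc (0:ℝ) t₀, a' ^ κ ≤ y s ^ κ := by
        intro s hs
        refine Real.rpow_le_rpow ha'pos.le ?_ hκ0.le
        rcases hs.2.eq_or_lt with h | h
        · rw [h]; exact ht₀ge
        · exact hbelow s hs.1 h
      calc a' ^ κ * t₀ = ∫ _ in (0:ℝ)..t₀, a' ^ κ := by
            rw [intervalIntegral.integral_const]; ring_nf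
      _ ≤ ∫ s in (0:ℝ)..t₀, y s ^ κ :=
        intervalIntegral.integral_mono_on ht₀0 intervalIntegrable_const hInt hmono
    have h1 : d * (a' ^ κ * t₀) ≤ d * ∫ s in (0:ℝ)..t₀, y s ^ κ :=
      mul_le_mul_of_nonneg_left hIbd hd.le
    have h2 : 2 * b * t₀ ≤ d * (a' ^ κ * t₀) := by nlinarith [ht₀pos, hkey]
    have h3 := hy t₀ ht₀pos
    nlinarith [mul_nonneg hb ht₀0]
  -- F t ≥ a'^κ t on [0, ∞)
  have hFbd : ∀ t : ℝ, 0 ≤ t → a' ^ κ * t ≤ F t := by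
    intro t ht
    have hInt : IntervalIntegrable (fun s => y s ^ κ) MeasureTheory.volume 0 t := by
      apply ContinuousOn.intervalIntegrable
      rw [uIcc_of_le ht]
      exact (hy_cont.mono (Icc_subset_Ici_self)).rpow_const (fun x _ => Or.inr hκ0.le)
    have hmono : ∀ s ∈ Icc (0:ℝ) t, a' ^ κ ≤ y s ^ κ := fun s hs =>
      Real.rpow_le_rpow ha'pos.le (hA s hs.1) hκ0.le
    have : a' ^ κ * t ≤ ∫ s in (0:ℝ)..t, y s ^ κ := by
      calc a' ^ κ * t = ∫ _ in (0:ℝ)..t, a' ^ κ := by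
            rw [intervalIntegral.integral_const]; ring_nf
      _ ≤ ∫ s in (0:ℝ)..t, y s ^ κ :=
        intervalIntegral.integral_mono_on ht intervalIntegrable_const hInt hmono
    rwa [hIeq t ht] at this
  have hFnonneg : ∀ t : ℝ, 0 ≤ t → 0 ≤ F t := by
    intro t ht
    have := hFbd t ht
    nlinarith [Real.rpow_pos_of_pos ha'pos κ]
  -- Step 2: y t ≥ a + (d/2) F t
  have hB : ∀ t : ℝ, 0 ≤ t → a + d / 2 * F t ≤ y t := by
    intro t ht
    rcases ht.eq_or_lt with h | h
    · rw [← h, hF0]; simpa using hy0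
    · have h3 := hy t h
      rw [hIeq t ht] at h3
      have k1 : d / 2 * (a' ^ κ * t) ≤ d / 2 * F t :=
        mul_le_mul_of_nonneg_left (hFbd t ht) (by positivity)
      have k2 : b * t ≤ d / 2 * (a' ^ κ * t) := by nlinarith [ht, hkey]
      linarith
  -- the comparison function g and ψ
  set g : ℝ → ℝ := fun t => a + d / 2 * F t with hg
  have hg_pos : ∀ t : ℝ, 0 ≤ t → a ≤ g t := by
    intro t ht
    have := hFnonneg t ht
    simp only [hg]
    nlinarith
  have hg_deriv : ∀ t : ℝ, HasDerivAt g (d / 2 * f t) t := fun t =>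
    ((hF_deriv t).const_mul (d / 2)).const_add a
  set c := (κ - 1) * (d / 2) with hc
  have hcpos : 0 < c := by rw [hc]; nlinarith
  set ψ : ℝ → ℝ := fun t => g t ^ (1 - κ) + c * t with hψ
  have hψ_deriv : ∀ t : ℝ, 0 ≤ t →
      HasDerivAt ψ ((d / 2 * f t) * (1 - κ) * g t ^ (1 - κ - 1) + c) t := by
    intro t ht
    have h1 : HasDerivAt (fun t => g t ^ (1 - κ))
        ((d / 2 * f t) * (1 - κ) * g t ^ (1 - κ - 1)) t :=
      (hg_deriv t).rpow_const (Or.inl (by linarith [hg_pos t ht]))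
    have h2 : HasDerivAt (fun t : ℝ => c * t) c t := by
      simpa using (hasDerivAt_id t).const_mul c
    exact h1.add h2
  have hψ_nonpos : ∀ t : ℝ, 0 < t →
      (d / 2 * f t) * (1 - κ) * g t ^ (1 - κ - 1) + c ≤ 0 := by
    intro t ht
    have hgt : 0 < g t := lt_of_lt_of_le ha (hg_pos t ht.le)
    have hfge : g t ^ κ ≤ f t := by
      rw [hf_eq t ht.le]
      exact Real.rpow_le_rpow hgt.le (hB t ht.le) hκ0.le
    have hexp : (1 : ℝ) - κ - 1 = -κ := by ring
    rw [hexp]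
    have hpow_pos : 0 < g t ^ (-κ) := Real.rpow_pos_of_pos hgt _
    have hprod : g t ^ κ * g t ^ (-κ) = 1 := by
      rw [← Real.rpow_add hgt]; simp
    have e1 : d / 2 * g t ^ κ ≤ d / 2 * f t :=
      mul_le_mul_of_nonneg_left hfge (by positivity)
    have e2 : (d / 2 * f t) * ((1 - κ) * g t ^ (-κ)) ≤
        (d / 2 * g t ^ κ) * ((1 - κ) * g t ^ (-κ)) := by
      apply mul_le_mul_of_nonpos_right e1
      exact mul_nonpos_of_nonpos_of_nonneg (by linarith) hpow_pos.le
    have e3 : (d / 2 * g t ^ κ) * ((1 - κ) * g t ^ (-κ)) = d / 2 * (1 - κ) := by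
      calc (d / 2 * g t ^ κ) * ((1 - κ) * g t ^ (-κ))
          = d / 2 * (1 - κ) * (g t ^ κ * g t ^ (-κ)) := by ring
      _ = d / 2 * (1 - κ) := by rw [hprod, mul_one]
    have : (d / 2 * f t) * (1 - κ) * g t ^ (-κ) ≤ d / 2 * (1 - κ) := by
      calc (d / 2 * f t) * (1 - κ) * g t ^ (-κ)
          = (d / 2 * f t) * ((1 - κ) * g t ^ (-κ)) := by ring
      _ ≤ (d / 2 * g t ^ κ) * ((1 - κ) * g t ^ (-κ)) := e2
      _ = d / 2 * (1 - κ) := e3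
    rw [hc]; linarith
  -- ψ is antitone on [0, ∞)
  have hanti : AntitoneOn ψ (Ici 0) := by
    apply antitoneOn_of_deriv_nonpos (convex_Ici 0)
    · intro t ht
      exact ((hψ_deriv t ht).continuousAt).continuousWithinAt
    · intro t ht
      rw [interior_Ici] at ht
      exact ((hψ_deriv t ht.le).differentiableAt).differentiableWithinAt
    · intro t ht
      rw [interior_Ici] at ht
      rw [(hψ_deriv t ht.le).deriv]
      exact hψ_nonpos t ht
  -- conclusion
  set T := a ^ (1 - κ) / c with hT
  have haT : 0 < a ^ (1 - κ) := Real.rpow_pos_of_pos ha _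
  have hTpos : 0 < T := div_pos haT hcpos
  have hle : ψ T ≤ ψ 0 := hanti (le_refl (0:ℝ)) hTpos.le hTpos.le
  have hψ0 : ψ 0 = a ^ (1 - κ) := by
    simp [hψ, hg, hF0]
  have hle' : g T ^ (1 - κ) + c * T ≤ a ^ (1 - κ) := by
    rw [← hψ0]; exact hle
  have hcT : c * T = a ^ (1 - κ) := by
    rw [hT]; field_simp
  have hgT : 0 < g T ^ (1 - κ) :=
    Real.rpow_pos_of_pos (lt_of_lt_of_le ha (hg_pos T hTpos.le)) _
  linarith
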